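/- Consider the 1-forms on ℝ⁴ with coordinates (x, y, z, θ): η¹ = e^{r₁θ}dx + e^{r₂θ}dy, η² = −r₁e^{r₁θ}dx − r₂e^{r₂θ}dy, η³ = e^{−Iθ}√(I²−4)(dz + (1/2)(x dy − y dx)), φ = dθ, where I is a constant with I² > 4 and r₁, r₂ = (−I ± √(I²−4))/2. Then dη¹ = η² ∧ φ, dη² = −η¹ ∧ φ + I η² ∧ φ, dη³ = η¹ ∧ η² + I η³ ∧ φ, and dφ = 0. -/

import Mathlib

open Real

/-- The exterior derivative of a 1-form on `ℝ⁴` (a 1-form being given by its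
action `ω p X` on constant vector fields `X`), evaluated on constant vectors. -/
noncomputable def extD (ω : (Fin 4 → ℝ) → (Fin 4 → ℝ) → ℝ) :
    (Fin 4 → ℝ) → (Fin 4 → ℝ) → (Fin 4 → ℝ) → ℝ :=
  fun p X Y => fderiv ℝ (fun q => ω q Y) p X - fderiv ℝ (fun q => ω q X) p Y

/-- The wedge product of two 1-forms on `ℝ⁴`. -/
def wedge (α β : (Fin 4 → ℝ) → (Fin 4 → ℝ) → ℝ) :
    (Fin 4 → ℝ) → (Fin 4 → ℝ) → (Fin 4 → ℝ) → ℝ :=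
  fun p X Y => α p X * β p Y - α p Y * β p X


lemma hproj (i : Fin 4) (p : Fin 4 → ℝ) :
    HasFDerivAt (fun q : Fin 4 → ℝ => q i)
      (ContinuousLinearMap.proj (R := ℝ) (φ := fun _ : Fin 4 => ℝ) i) p :=
  (ContinuousLinearMap.proj (R := ℝ) (φ := fun _ : Fin 4 => ℝ) i).hasFDerivAt

lemma L1 (c d a b : ℝ) (p X : Fin 4 → ℝ) :
    fderiv ℝ (fun q : Fin 4 → ℝ => Real.exp (c * q 3) * a + Real.exp (d * q 3) * b) p X
      = (Real.exp (c * p 3) * c * a + Real.exp (d * p 3) * d * b) * X 3 := by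
  have h := ((((hproj 3 p).const_mul c).exp).mul_const a).add
      ((((hproj 3 p).const_mul d).exp).mul_const b)
  rw [show fderiv ℝ (fun q : Fin 4 → ℝ => Real.exp (c * q 3) * a + Real.exp (d * q 3) * b) p
    = _ from h.fderiv]
  simp [ContinuousLinearMap.proj]
  ring

lemma L2 (c d a b u v : ℝ) (p X : Fin 4 → ℝ) :
    fderiv ℝ (fun q : Fin 4 → ℝ => c * Real.exp (a * q 3) * u - d * Real.exp (b * q 3) * v) p X
      = (c * Real.exp (a * p 3) * a * u - d * Real.exp (b * p 3) * b * v) * X 3 := by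
  have h := (((((hproj 3 p).const_mul a).exp).const_mul c).mul_const u).sub
      (((((hproj 3 p).const_mul b).exp).const_mul d).mul_const v)
  rw [show fderiv ℝ (fun q : Fin 4 → ℝ => c * Real.exp (a * q 3) * u - d * Real.exp (b * q 3) * v) p
    = _ from h.fderiv]
  simp [ContinuousLinearMap.proj]
  ring

lemma L3 (c K u v w : ℝ) (p X : Fin 4 → ℝ) :
    fderiv ℝ (fun q : Fin 4 → ℝ =>
        Real.exp (c * q 3) * K * (w + 1/2 * (q 0 * v - q 1 * u))) p X
      = Real.exp (c * p 3) * c * X 3 * K * (w + 1/2 * (p 0 * v - p 1 * u))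
        + Real.exp (c * p 3) * K * (1/2 * (X 0 * v - X 1 * u)) := by
  have hf := (((hproj 3 p).const_mul c).exp).mul_const K
  have hg := ((((hproj 0 p).mul_const v).sub ((hproj 1 p).mul_const u)).const_mul
      (1/2 : ℝ)).const_add w
  have h := hf.mul hg
  rw [show fderiv ℝ (fun q : Fin 4 → ℝ =>
        Real.exp (c * q 3) * K * (w + 1/2 * (q 0 * v - q 1 * u))) p = _ from h.fderiv]
  simp [ContinuousLinearMap.proj]
  ring

theorem homogeneous_structure_equations_hyperbolic (I : ℝ) (hI : I ^ 2 > 4)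
    (r₁ r₂ : ℝ) (hr₁ : r₁ = (-I + Real.sqrt (I ^ 2 - 4)) / 2)
    (hr₂ : r₂ = (-I - Real.sqrt (I ^ 2 - 4)) / 2)
    (η₁ η₂ η₃ φ : (Fin 4 → ℝ) → (Fin 4 → ℝ) → ℝ)
    (hη₁ : ∀ p X, η₁ p X = Real.exp (r₁ * p 3) * X 0 + Real.exp (r₂ * p 3) * X 1)
    (hη₂ : ∀ p X, η₂ p X = -r₁ * Real.exp (r₁ * p 3) * X 0
        - r₂ * Real.exp (r₂ * p 3) * X 1)
    (hη₃ : ∀ p X, η₃ p X = Real.exp (-I * p 3) * Real.sqrt (I ^ 2 - 4) *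
        (X 2 + (1/2) * (p 0 * X 1 - p 1 * X 0)))
    (hφ : ∀ p X, φ p X = X 3) :
    ∀ p X Y,
      extD η₁ p X Y = wedge η₂ φ p X Y ∧
      extD η₂ p X Y = -wedge η₁ φ p X Y + I * wedge η₂ φ p X Y ∧
      extD η₃ p X Y = wedge η₁ η₂ p X Y + I * wedge η₃ φ p X Y ∧
      extD φ p X Y = 0 := by
  have h4 : Real.sqrt (I ^ 2 - 4) ^ 2 = I ^ 2 - 4 := Real.sq_sqrt (by nlinarith)
  have hsum : r₁ + r₂ = -I := by rw [hr₁, hr₂]; ring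
  have hprod : r₁ * r₂ = 1 := by
    rw [hr₁, hr₂]; linear_combination (-(1:ℝ)/4) * h4
  have hs : Real.sqrt (I ^ 2 - 4) = r₁ - r₂ := by rw [hr₁, hr₂]; ring
  have hq1 : r₁ ^ 2 = -1 - I * r₁ := by linear_combination r₁ * hsum - hprod
  have hq2 : r₂ ^ 2 = -1 - I * r₂ := by linear_combination r₂ * hsum - hprod
  intro p X Y
  have hE : Real.exp (-I * p 3) = Real.exp (r₁ * p 3) * Real.exp (r₂ * p 3) := by
    rw [← Real.exp_add, ← add_mul, hsum]
  refine ⟨?_, ?_, ?_, ?_⟩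
  · simp only [extD, wedge, hη₁, hη₂, hφ, L1]
    ring
  · simp only [extD, wedge, hη₁, hη₂, hφ, L1, L2]
    linear_combination (Real.exp (r₁ * p 3) * (X 0 * Y 3 - X 3 * Y 0)) * hq1
      + (Real.exp (r₂ * p 3) * (X 1 * Y 3 - X 3 * Y 1)) * hq2
  · simp only [extD, wedge, hη₁, hη₂, hη₃, hφ, L1, L2, L3]
    rw [hE, hs]
    ring
  · simp only [extD, hφ]
    simp [fderiv_const]
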